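/- Let n ≥ 3 and let δ be an integer with 1 ≤ δ < n/2. If G is a finite simple graph on n vertices with minimum degree δ(G) ≥ δ and e(G) > max{ C(n−δ,2) + δ², C(n−⌊(n−1)/2⌋,2) + ⌊(n−1)/2⌋² }, where C(a,2)=a(a−1)/2, then G contains a Hamilton cycle. -/

import Mathlib

open Finset SimpleGraph

def chainWalk {V : Type*} (G : SimpleGraph V) :
    (a : V) → (l : List V) → List.Chain G.Adj a l → G.Walk a (l.getLastD a)
  | _, [], _ => SimpleGraph.Walk.nil
  | a, b :: t, h =>
    (SimpleGraph.Walk.cons (List.chain_cons.mp h).1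
      (chainWalk G b t (List.chain_cons.mp h).2)).copy rfl (by cases t with | nil => rfl | cons c s => simp [List.getLastD_cons, List.getLast?_eq_getLast (l := c::s) (by simp)])

lemma chainWalk_support {V : Type*} (G : SimpleGraph V) :
    ∀ (a : V) (l : List V) (h : List.Chain G.Adj a l),
      (chainWalk G a l h).support = a :: l
  | _, [], _ => rfl
  | a, b :: t, h => by
    rw [chainWalk]
    simp [chainWalk_support G b t (List.chain_cons.mp h).2]

lemma chainWalk_edges {V : Type*} (G : SimpleGraph V) :
    ∀ (a : V) (l : List V) (h : List.Chain G.Adj a l),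
      (chainWalk G a l h).edges = List.zipWith (fun x y => s(x, y)) (a :: l) l
  | _, [], _ => rfl
  | a, b :: t, h => by
    rw [chainWalk]
    simp [chainWalk_edges G b t (List.chain_cons.mp h).2]

theorem List.chain_iff_get {α : Type*} {R : α → α → Prop} {a : α} {l : List α} :
    List.Chain R a l ↔ (∀ h : 0 < l.length, R a (l.get ⟨0, h⟩)) ∧
      ∀ (i : ℕ) (h : i < l.length - 1), R (l.get ⟨i, by omega⟩) (l.get ⟨i + 1, by omega⟩) := by
  constructor
  · intro h
    rw [List.Chain, List.isChain_iff_getElem] at h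
    refine ⟨fun _ => by simpa using h 0 (by simp; omega), fun i hi => ?_⟩
    exact h (i + 1) (by simp; omega)
  · rintro ⟨h0, h⟩
    rw [List.Chain, List.isChain_iff_getElem]
    intro i hi
    cases i with
    | zero => simpa using h0 (by simp at hi; omega)
    | succ i => simpa using h i (by simp at hi; omega)

lemma hamOfFun {n : ℕ} (hn3 : 3 ≤ n) {G : SimpleGraph (Fin n)} (g : ZMod n → Fin n)
    (hb : Function.Bijective g) (ha : ∀ i, G.Adj (g i) (g (i + 1))) :
    ∃ (v : Fin n) (c : G.Walk v v), c.IsHamiltonianCycle := by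
  haveI : NeZero n := ⟨by omega⟩
  have hcard : Fintype.card (ZMod n) = n := ZMod.card n
  have hinj : ∀ a b : ℕ, a < n → b < n → g a = g b → a = b := by
    intro a b ha' hb' h
    have h2 := congrArg ZMod.val (hb.1 h)
    rwa [ZMod.val_cast_of_lt ha', ZMod.val_cast_of_lt hb'] at h2
  set m := List.ofFn (fun j : Fin n => g ((j.val : ZMod n) + 1)) with hm
  have hmlen : m.length = n := by simp [hm]
  have hmget : ∀ (i : ℕ) (h : i < m.length), m.get ⟨i, h⟩ = g ((i : ZMod n) + 1) := by
    intro i h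
    simp [hm, List.get_ofFn]
  have hmgetE : ∀ (i : ℕ) (h : i < m.length), m[i] = g ((i : ZMod n) + 1) := by
    intro i h
    exact hmget i h
  have hchain : List.Chain G.Adj (g 0) m := by
    rw [List.chain_iff_get]
    constructor
    · intro h
      rw [hmget 0 h]
      simpa using ha 0
    · intro i h
      rw [hmget i (by omega), hmget (i+1) (by omega)]
      have hc : ((i+1:ℕ) : ZMod n) = (i : ZMod n) + 1 := by push_cast; ring
      rw [hc]
      exact ha _
  have hlast : m.getLastD (g 0) = g 0 := by
    have hne : m ≠ [] := by
      intro h; rw [h] at hmlen; simp at hmlen; omega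
    rw [List.getLastD_eq_getLast? , List.getLast?_eq_getLast hne, Option.getD_some, List.getLast_eq_getElem]
    show m.get ⟨m.length - 1, by rw [hmlen]; omega⟩ = g 0
    rw [hmget _ _]
    congr 1
    rw [hmlen]
    have h1 : ((n - 1 + 1 : ℕ) : ZMod n) = ((n - 1 : ℕ) : ZMod n) + 1 := by push_cast; ring
    rw [show n - 1 + 1 = n from by omega] at h1
    rw [← h1, ZMod.natCast_self]
  have h2 : (2 : ZMod n) ≠ 0 := by
    intro h
    have hh : ((2:ℕ) : ZMod n) = ((0:ℕ) : ZMod n) := by push_cast; exact h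
    have := congrArg ZMod.val hh
    rw [ZMod.val_cast_of_lt (by omega), ZMod.val_cast_of_lt (by omega)] at this
    omega
  let c : G.Walk (g 0) (g 0) := (chainWalk G (g 0) m hchain).copy rfl hlast
  have hsupp : c.support = g 0 :: m := by
    simp [c, chainWalk_support]
  have hedges : c.edges = List.ofFn
      (fun i : Fin n => s(g (i.val : ZMod n), g ((i.val : ZMod n) + 1))) := by
    have hez : c.edges = List.zipWith (fun x y => s(x, y)) (g 0 :: m) m := by
      simp [c, chainWalk_edges]
    rw [hez]
    apply List.ext_getElem
    · simp [hmlen]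
    · intro i h1' h2'
      have hi : i < n := by simpa using h2'
      simp only [List.getElem_zipWith, List.getElem_ofFn]
      have hcons : (g 0 :: m)[i]'(by simp [hmlen]; omega) = g (i : ZMod n) := by
        cases i with
        | zero => simp
        | succ j =>
          rw [List.getElem_cons_succ, hmgetE j (by rw [hmlen]; omega)]
          congr 1
          push_cast
          ring
      rw [hcons, hmgetE i (by rw [hmlen]; exact hi)]
  have hmnodup : m.Nodup := by
    rw [hm, List.nodup_ofFn]
    intro i j hij
    have e1 : ((i.val : ZMod n) + 1) = ((j.val : ZMod n) + 1) := hb.1 hij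
    have e2 : (i.val : ZMod n) = (j.val : ZMod n) := by
      have := congrArg (fun x => x - 1) e1
      simpa using this
    have := congrArg ZMod.val e2
    rw [ZMod.val_cast_of_lt i.2, ZMod.val_cast_of_lt j.2] at this
    exact Fin.ext this
  have hmmem : ∀ x : Fin n, x ∈ m := by
    intro x
    obtain ⟨i, hi⟩ := hb.2 x
    rw [hm, List.mem_ofFn]
    refine ⟨⟨(i - 1).val, (i-1).val_lt⟩, ?_⟩
    show g _ = x
    rw [ZMod.natCast_val, ZMod.cast_id, sub_add_cancel]
    exact hi
  have hcyc : c.IsCycle := by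
    rw [SimpleGraph.Walk.isCycle_def]
    refine ⟨(SimpleGraph.Walk.isTrail_def _).2 ?_, ?_, ?_⟩
    · rw [hedges, List.nodup_ofFn]
      intro i j hij
      simp only [Sym2.eq_iff] at hij
      rcases hij with ⟨e1, e2⟩ | ⟨e1, e2⟩
      · exact Fin.ext (hinj i.val j.val i.2 j.2 e1)
      · exfalso
        have hij1 : (i.val : ZMod n) = (j.val : ZMod n) + 1 := hb.1 e1
        have hij2 : (i.val : ZMod n) + 1 = (j.val : ZMod n) := hb.1 e2
        rw [hij1] at hij2
        exact h2 (by linear_combination hij2)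
    · intro hc
      have hlen : c.edges.length = n := by rw [hedges]; simp
      rw [hc] at hlen
      simp at hlen
      omega
    · rw [hsupp]
      simpa using hmnodup
  refine ⟨g 0, c, ?_⟩
  rw [SimpleGraph.Walk.isHamiltonianCycle_iff_isCycle_and_support_count_tail_eq_one]
  refine ⟨hcyc, ?_⟩
  intro x
  rw [hsupp]
  simpa using List.count_eq_one_of_mem hmnodup (hmmem x)

lemma funOfHam {n : ℕ} (hn3 : 3 ≤ n) {G : SimpleGraph (Fin n)} {v : Fin n} {c : G.Walk v v}
    (hc : c.IsHamiltonianCycle) :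
    ∃ g : ZMod n → Fin n, Function.Bijective g ∧ ∀ i, G.Adj (g i) (g (i + 1)) := by
  haveI : NeZero n := ⟨by omega⟩
  have hcount : ∀ x, c.support.tail.count x = 1 :=
    (SimpleGraph.Walk.isHamiltonianCycle_iff_isCycle_and_support_count_tail_eq_one.1 hc).2
  have htlen : c.support.tail.length = n := by
    have h1 : c.length = n := by simpa using hc.length_eq
    have h2 : c.support.length = c.length + 1 := SimpleGraph.Walk.length_support c
    simp [List.length_tail, h2, h1]
  have htnodup : c.support.tail.Nodup :=
    List.nodup_iff_count_le_one.2 (fun x => le_of_eq (hcount x))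
  have htmem : ∀ x, x ∈ c.support.tail := by
    intro x
    rw [← List.count_pos_iff, hcount]
    omega
  have hsupp : c.support = v :: c.support.tail := SimpleGraph.Walk.support_eq_cons c
  have htne : c.support.tail ≠ [] := by
    apply List.ne_nil_of_length_pos
    omega
  have hlastt : c.support.tail.getLast htne = v := by
    rw [List.getLast_tail]
    exact SimpleGraph.Walk.getLast_support c
  set t := c.support.tail with ht
  have hgetE : ∀ j, j < n → j < t.length := fun j h => by omega
  have hgcong : ∀ (a b : ℕ) (ha : a < t.length) (hb : b < t.length), a = b →
      t[a]'ha = t[b]'hb := by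
    intro a b ha hb h
    subst h
    rfl
  have hchain : List.Chain G.Adj v t := by
    have h1 := c.isChain_adj_support
    rw [hsupp] at h1
    exact h1
  rw [List.chain_iff_get] at hchain
  obtain ⟨hch0, hchS⟩ := hchain
  have hzsucc : ∀ i : ZMod n, i.val + 1 < n → (i + 1).val = i.val + 1 := by
    intro i h
    have e : i + 1 = ((i.val + 1 : ℕ) : ZMod n) := by
      push_cast
      rw [ZMod.natCast_val, ZMod.cast_id]
    rw [e, ZMod.val_cast_of_lt h]
  refine ⟨fun i => t[i.val]'(hgetE i.val i.val_lt), ?_, ?_⟩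
  · constructor
    · intro i j hij
      have h1 : t.get ⟨i.val, hgetE i.val i.val_lt⟩ = t.get ⟨j.val, hgetE j.val j.val_lt⟩ := hij
      have h2 := List.nodup_iff_injective_get.1 htnodup h1
      exact ZMod.val_injective n (congrArg Fin.val h2)
    · intro x
      obtain ⟨idx, hidx⟩ := List.mem_iff_get.1 (htmem x)
      refine ⟨((idx.val : ℕ) : ZMod n), ?_⟩
      have hv : ((idx.val : ℕ) : ZMod n).val = idx.val := ZMod.val_cast_of_lt (by omega)
      simp only [hv]
      exact hidx
  · intro i
    by_cases hi : i.val + 1 < n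
    · have h1 := hchS i.val (by omega)
      simp only [hzsucc i hi]
      exact h1
    · have hival : i.val = n - 1 := by have := i.val_lt; omega
      have h1 : (i + 1).val = 0 := by
        have e1 : i = ((n - 1 : ℕ) : ZMod n) := by
          apply ZMod.val_injective
          rw [ZMod.val_cast_of_lt (by omega : n - 1 < n), hival]
        rw [e1]
        have e2 : ((n - 1 : ℕ) : ZMod n) + 1 = ((n - 1 + 1 : ℕ) : ZMod n) := by push_cast; ring
        rw [e2, show n - 1 + 1 = n from by omega, ZMod.natCast_self]
        exact ZMod.val_zero
      have hlastE : t[i.val]'(hgetE _ i.val_lt) = v := by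
        rw [← hlastt, List.getLast_eq_getElem]
        exact hgcong _ _ _ _ (by rw [htlen, hival])
      have h2 := hch0 (by omega)
      simp only [h1, hlastE]
      exact h2

lemma zsucc {n : ℕ} [NeZero n] (i : ZMod n) (h : i.val + 1 < n) : (i + 1).val = i.val + 1 := by
  have e : i + 1 = ((i.val + 1 : ℕ) : ZMod n) := by
    push_cast
    rw [ZMod.natCast_val, ZMod.cast_id]
  rw [e, ZMod.val_cast_of_lt h]

lemma zneg_one {n : ℕ} [NeZero n] (hn1 : 1 ≤ n) : (-1 : ZMod n) = ((n - 1 : ℕ) : ZMod n) := by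
  have e : ((n - 1 : ℕ) : ZMod n) + 1 = 0 := by
    have : ((n - 1 + 1 : ℕ) : ZMod n) = ((n - 1 : ℕ) : ZMod n) + 1 := by push_cast; ring
    rw [← this, show n - 1 + 1 = n from by omega, ZMod.natCast_self]
  linear_combination -e

lemma zneg_one_val {n : ℕ} [NeZero n] (hn1 : 1 ≤ n) : (-1 : ZMod n).val = n - 1 := by
  rw [zneg_one hn1, ZMod.val_cast_of_lt (by omega)]

lemma ztwo_ne {n : ℕ} [NeZero n] (hn3 : 3 ≤ n) : (1 : ZMod n) ≠ (-1 : ZMod n) := by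
  intro h
  have := congrArg ZMod.val h
  rw [zneg_one_val (by omega), ZMod.val_one_eq_one_mod] at this
  rw [Nat.mod_eq_of_lt (by omega)] at this
  omega

lemma zval_eq {n : ℕ} [NeZero n] {i j : ZMod n} (h : i.val = j.val) : i = j :=
  ZMod.val_injective n h

lemma crossing {n : ℕ} (hn3 : 3 ≤ n) {H : SimpleGraph (Fin n)}
    (hnotham : ¬ ∃ (v : Fin n) (c : H.Walk v v), c.IsHamiltonianCycle)
    {u v : Fin n} (huv : u ≠ v) (hadj : ¬ H.Adj u v)
    (hham : ∃ (w : Fin n) (c : (H ⊔ SimpleGraph.fromEdgeSet {s(u,v)}).Walk w w),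
      c.IsHamiltonianCycle) :
    ∃ h : ZMod n → Fin n, Function.Bijective h ∧ h 0 = u ∧ h (-1) = v ∧
      ∀ t : ZMod n, t ≠ -1 → H.Adj (h t) (h (t + 1)) := by
  haveI : NeZero n := ⟨by omega⟩
  obtain ⟨w, c, hc⟩ := hham
  obtain ⟨g, hb, ha⟩ := funOfHam hn3 hc
  have hH' : ∀ x y, (H ⊔ SimpleGraph.fromEdgeSet {s(u,v)}).Adj x y ↔
      H.Adj x y ∨ (s(x,y) = s(u,v) ∧ x ≠ y) := by
    intro x y
    simp [SimpleGraph.fromEdgeSet_adj]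
  have hex : ∃ i₀, ¬ H.Adj (g i₀) (g (i₀ + 1)) := by
    by_contra hall
    push_neg at hall
    exact hnotham (hamOfFun hn3 g hb hall)
  obtain ⟨i₀, hi₀⟩ := hex
  have hpair : s(g i₀, g (i₀ + 1)) = s(u, v) := by
    have := (hH' _ _).1 (ha i₀)
    tauto
  rw [Sym2.eq_iff] at hpair
  -- construct h with h 0 = u, h (-1) = v, all H'-adjacent consecutive
  obtain ⟨h, hb', ha', h0, hm1⟩ :
      ∃ h : ZMod n → Fin n, Function.Bijective h ∧
        (∀ t, (H ⊔ SimpleGraph.fromEdgeSet {s(u,v)}).Adj (h t) (h (t + 1))) ∧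
        h 0 = u ∧ h (-1) = v := by
    rcases hpair with ⟨e1, e2⟩ | ⟨e1, e2⟩
    · refine ⟨fun t => g (i₀ - t), (hb.comp (Equiv.subLeft i₀).bijective), ?_, by simpa, ?_⟩
      · intro t
        show (H ⊔ SimpleGraph.fromEdgeSet {s(u,v)}).Adj (g (i₀ - t)) (g (i₀ - (t + 1)))
        have := (ha (i₀ - t - 1)).symm
        have e : i₀ - t - 1 + 1 = i₀ - t := by ring
        rw [e] at this
        have e' : i₀ - (t + 1) = i₀ - t - 1 := by ring
        rw [e']
        exact this
      · show g (i₀ - (-1)) = v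
        have e : i₀ - (-1) = i₀ + 1 := by ring
        rw [e]
        exact e2
    · refine ⟨fun t => g (i₀ + 1 + t), (hb.comp (Equiv.addLeft (i₀+1)).bijective), ?_, by simpa, ?_⟩
      · intro t
        show (H ⊔ SimpleGraph.fromEdgeSet {s(u,v)}).Adj (g (i₀ + 1 + t)) (g (i₀ + 1 + (t + 1)))
        have e : i₀ + 1 + (t + 1) = (i₀ + 1 + t) + 1 := by ring
        rw [e]
        exact ha _
      · show g (i₀ + 1 + (-1)) = v
        have e : i₀ + 1 + (-1) = i₀ := by ring
        rw [e]
        exact e1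
  refine ⟨h, hb', h0, hm1, ?_⟩
  intro t ht
  by_contra hno
  have := (hH' _ _).1 (ha' t)
  rcases this with hyes | ⟨hp, _⟩
  · exact hno hyes
  rw [Sym2.eq_iff] at hp
  rcases hp with ⟨e1, e2⟩ | ⟨e1, e2⟩
  · have ht0 : t = 0 := hb'.1 (by rw [e1, h0])
    rw [ht0] at e2
    have : (0 : ZMod n) + 1 = -1 := hb'.1 (by rw [e2, hm1])
    rw [zero_add] at this
    exact ztwo_ne hn3 this
  · have : t + 1 = 0 := hb'.1 (by rw [e2, h0])
    apply ht
    linear_combination this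

lemma degree_sum_bound {n : ℕ} (hn3 : 3 ≤ n) {H : SimpleGraph (Fin n)} [DecidableRel H.Adj]
    (hnotham : ¬ ∃ (v : Fin n) (c : H.Walk v v), c.IsHamiltonianCycle)
    (hmax : ∀ u v : Fin n, u ≠ v → ¬ H.Adj u v →
      ∃ (w : Fin n) (c : (H ⊔ SimpleGraph.fromEdgeSet {s(u,v)}).Walk w w), c.IsHamiltonianCycle)
    {u v : Fin n} (huv : u ≠ v) (hadj : ¬ H.Adj u v) :
    H.degree u + H.degree v + 1 ≤ n := by
  haveI : NeZero n := ⟨by omega⟩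
  obtain ⟨h, hb, h0, hm1, key⟩ := crossing hn3 hnotham huv hadj (hmax u v huv hadj)
  classical
  set T1 := Finset.univ.filter (fun j : ZMod n => H.Adj u (h (j + 1))) with hT1
  set T2 := Finset.univ.filter (fun j : ZMod n => H.Adj v (h j)) with hT2
  have hcard1 : T1.card = H.degree u := by
    rw [← SimpleGraph.card_neighborFinset_eq_degree]
    apply Finset.card_bij (fun j _ => h (j + 1))
    · intro j hj
      rw [SimpleGraph.mem_neighborFinset]
      exact (Finset.mem_filter.1 hj).2
    · intro a ha2 b hb2 e
      exact add_right_cancel (hb.1 e)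
    · intro x hx
      obtain ⟨i, hi⟩ := hb.2 x
      refine ⟨i - 1, Finset.mem_filter.2 ⟨Finset.mem_univ _, ?_⟩, ?_⟩
      · rw [sub_add_cancel, hi]
        exact (SimpleGraph.mem_neighborFinset H u x).1 hx
      · rw [sub_add_cancel, hi]
  have hcard2 : T2.card = H.degree v := by
    rw [← SimpleGraph.card_neighborFinset_eq_degree]
    apply Finset.card_bij (fun j _ => h j)
    · intro j hj
      rw [SimpleGraph.mem_neighborFinset]
      exact (Finset.mem_filter.1 hj).2
    · intro a ha2 b hb2 e
      exact hb.1 e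
    · intro x hx
      obtain ⟨i, hi⟩ := hb.2 x
      refine ⟨i, Finset.mem_filter.2 ⟨Finset.mem_univ _, ?_⟩, hi⟩
      rw [hi]
      exact (SimpleGraph.mem_neighborFinset H v x).1 hx
  have hdisj : ∀ j, j ∈ T1 → j ∈ T2 → False := by
    intro j hj1 hj2
    replace hj1 : H.Adj u (h (j + 1)) := (Finset.mem_filter.1 hj1).2
    replace hj2 : H.Adj v (h j) := (Finset.mem_filter.1 hj2).2
    have hjne : j ≠ -1 := by
      intro e
      rw [e, show (-1 : ZMod n) + 1 = 0 from by ring, h0] at hj1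
      exact H.loopless.irrefl u hj1
    set k := j.val with hk
    have hkn : k ≤ n - 2 := by
      have h1 := j.val_lt
      have h2 : j.val ≠ n - 1 := by
        intro e
        exact hjne (zval_eq (by rw [e, zneg_one_val (by omega : 1 ≤ n)]))
      omega
    have hK : ((k : ℕ) : ZMod n) = j := by rw [hk, ZMod.natCast_val, ZMod.cast_id]
    have hKval : ((k : ℕ) : ZMod n).val = k := ZMod.val_cast_of_lt (by omega)
    have hsubval : ∀ b : ZMod n, k < b.val → (((k : ℕ) : ZMod n) - b).val = k + n - b.val := by
      intro b hbv
      have hblt := b.val_lt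
      have e1 : ((k : ℕ) : ZMod n) - b = ((k + n - b.val : ℕ) : ZMod n) := by
        rw [Nat.cast_sub (by omega), Nat.cast_add, ZMod.natCast_self, ZMod.natCast_val,
          ZMod.cast_id, ZMod.natCast_val, ZMod.cast_id]
        ring
      rw [e1, ZMod.val_cast_of_lt (by omega)]
    set σ : ZMod n → ZMod n := fun i => if i.val ≤ k then i else ((k : ℕ) : ZMod n) - i with hσ
    have hinv : Function.Involutive σ := by
      intro i
      by_cases hi : i.val ≤ k
      · have s1 : σ i = i := if_pos hi
        rw [s1, s1]
      · have s1 : σ i = ((k : ℕ) : ZMod n) - i := if_neg hi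
        have hv : (((k : ℕ) : ZMod n) - i).val = k + n - i.val := hsubval i (by omega)
        have s2 : σ (σ i) = ((k : ℕ) : ZMod n) - (((k : ℕ) : ZMod n) - i) := by
          rw [s1]
          apply if_neg
          rw [hv]
          have := i.val_lt
          omega
        rw [s2, sub_sub_cancel]
    apply hnotham
    apply hamOfFun hn3 (fun i => h (σ i)) (hb.comp hinv.bijective)
    intro i
    show H.Adj (h (σ i)) (h (σ (i + 1)))
    have hvlt := i.val_lt
    by_cases c1 : i.val < k
    · have hsucc : (i + 1).val = i.val + 1 := zsucc i (by omega)
      have s1 : σ i = i := if_pos (by omega)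
      have s2 : σ (i + 1) = i + 1 := if_pos (by rw [hsucc]; omega)
      rw [s1, s2]
      apply key i
      intro e
      rw [e, zneg_one_val (by omega : 1 ≤ n)] at c1
      omega
    · by_cases c2 : i.val = k
      · have hij : i = j := zval_eq (by rw [c2])
        have hsucc : (i + 1).val = k + 1 := by rw [zsucc i (by omega), c2]
        have s1 : σ i = i := if_pos (by omega)
        have s2 : σ (i + 1) = ((k : ℕ) : ZMod n) - (i + 1) := if_neg (by rw [hsucc]; omega)
        have e2 : ((k : ℕ) : ZMod n) - (i + 1) = -1 := by
          rw [hK, hij]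
          ring
        rw [s1, s2, e2, hij, hm1]
        exact hj2.symm
      · by_cases c4 : i.val = n - 1
        · have hi1 : i = -1 := zval_eq (by rw [c4, zneg_one_val (by omega : 1 ≤ n)])
          have s1 : σ i = ((k : ℕ) : ZMod n) - i := if_neg (by omega)
          have e1 : ((k : ℕ) : ZMod n) - i = j + 1 := by rw [hK, hi1]; ring
          have hi10 : i + 1 = 0 := by rw [hi1]; ring
          have s2 : σ (i + 1) = i + 1 := if_pos (by rw [hi10]; simp)
          rw [s1, e1, s2, hi10, h0]
          exact hj1.symm
        · -- k < i.val < n - 1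
          have s1 : σ i = ((k : ℕ) : ZMod n) - i := if_neg (by omega)
          have hsucc : (i + 1).val = i.val + 1 := zsucc i (by omega)
          have s2 : σ (i + 1) = ((k : ℕ) : ZMod n) - (i + 1) := if_neg (by rw [hsucc]; omega)
          rw [s1, s2]
          have hKi : ((k : ℕ) : ZMod n) - i ≠ 0 := by
            intro e
            have e5 : ((k : ℕ) : ZMod n) = i := by linear_combination e
            have e6 : k = i.val := by rw [← hKval, e5]
            omega
          have := key (((k : ℕ) : ZMod n) - (i + 1)) (by
            intro e
            apply hKi
            have : ((k : ℕ) : ZMod n) - (i + 1) = -1 := e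
            linear_combination this)
          have e3 : ((k : ℕ) : ZMod n) - (i + 1) + 1 = ((k : ℕ) : ZMod n) - i := by ring
          rw [e3] at this
          exact this.symm
  have hsub : T1 ∪ T2 ⊆ Finset.univ.erase (-1 : ZMod n) := by
    intro j hj
    refine Finset.mem_erase.2 ⟨?_, Finset.mem_univ _⟩
    intro e
    subst e
    rcases Finset.mem_union.1 hj with hj | hj
    · have := (Finset.mem_filter.1 hj).2
      rw [show (-1 : ZMod n) + 1 = 0 from by ring, h0] at this
      exact H.loopless.irrefl u this
    · have := (Finset.mem_filter.1 hj).2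
      rw [hm1] at this
      exact H.loopless.irrefl v this
  have hdisj' : Disjoint T1 T2 :=
    Finset.disjoint_left.2 (fun {j} hj1 hj2 => (hdisj j hj1 hj2).elim)
  have hcards : T1.card + T2.card ≤ n - 1 := by
    rw [← Finset.card_union_of_disjoint hdisj']
    calc (T1 ∪ T2).card ≤ (Finset.univ.erase (-1 : ZMod n)).card := Finset.card_le_card hsub
    _ = Fintype.card (ZMod n) - 1 := by rw [Finset.card_erase_of_mem (Finset.mem_univ _), Finset.card_univ]
    _ = n - 1 := by rw [ZMod.card]
  rw [hcard1, hcard2] at hcards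
  omega

lemma complete_ham {n : ℕ} (hn3 : 3 ≤ n) {H : SimpleGraph (Fin n)}
    (hc : ∀ x y : Fin n, x ≠ y → H.Adj x y) :
    ∃ (v : Fin n) (c : H.Walk v v), c.IsHamiltonianCycle := by
  haveI : NeZero n := ⟨by omega⟩
  have hone : (1 : ZMod n) ≠ 0 := by
    intro e
    have := congrArg ZMod.val e
    rw [ZMod.val_one_eq_one_mod, Nat.mod_eq_of_lt (by omega), ZMod.val_zero] at this
    omega
  apply hamOfFun hn3 (fun i : ZMod n => (⟨i.val, i.val_lt⟩ : Fin n))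
  · constructor
    · intro a b e
      exact zval_eq (congrArg Fin.val e)
    · intro x
      exact ⟨((x.val : ℕ) : ZMod n), Fin.ext (by simp [ZMod.val_cast_of_lt x.isLt])⟩
  · intro i
    apply hc
    intro e
    have : i.val = (i + 1).val := congrArg Fin.val e
    have : i = i + 1 := zval_eq this
    exact hone (by linear_combination -this)

lemma two_mul_choose_two (m : ℕ) : 2 * Nat.choose m 2 = m * (m - 1) := by
  rw [Nat.choose_two_right, Nat.two_mul_div_two_of_even]
  match m with
  | 0 => simp
  | m + 1 => simpa [Nat.mul_comm] using Nat.even_mul_succ_self m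

lemma chain_mono (f : ℕ → ℕ) :
    ∀ a b, a ≤ b → (∀ j, a ≤ j → j + 1 ≤ b → f j ≤ f (j + 1)) → f a ≤ f b := by
  intro a b
  induction b with
  | zero => intro h _; rw [Nat.le_zero.1 h]
  | succ b ih =>
    intro hab h
    rcases Nat.lt_or_ge a (b + 1) with hlt | hge
    · exact le_trans (ih (by omega) (fun j hj hj' => h j hj (by omega)))
        (h b (by omega) le_rfl)
    · have : a = b + 1 := by omega
      rw [this]

lemma chain_anti (f : ℕ → ℕ) :
    ∀ a b, a ≤ b → (∀ j, a ≤ j → j + 1 ≤ b → f (j + 1) ≤ f j) → f b ≤ f a := by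
  intro a b
  induction b with
  | zero => intro h _; rw [Nat.le_zero.1 h]
  | succ b ih =>
    intro hab h
    rcases Nat.lt_or_ge a (b + 1) with hlt | hge
    · exact le_trans (h b (by omega) le_rfl)
        (ih (by omega) (fun j hj hj' => h j hj (by omega)))
    · have : a = b + 1 := by omega
      rw [this]

lemma convex_bound {n δ k : ℕ} (h1 : δ ≤ k) (h2 : 2 * k + 1 ≤ n) (hn3 : 3 ≤ n) :
    Nat.choose (n - k) 2 + k ^ 2 ≤
      max (Nat.choose (n - δ) 2 + δ ^ 2)
        (Nat.choose (n - (n - 1) / 2) 2 + ((n - 1) / 2) ^ 2) := by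
  set m := (n - 1) / 2 with hm
  have hkm : k ≤ m := by omega
  set f : ℕ → ℕ := fun j => Nat.choose (n - j) 2 + j ^ 2 with hf
  have hchoose : ∀ j, j + 1 ≤ m → Nat.choose (n - j) 2 = Nat.choose (n - (j + 1)) 2 + (n - j - 1) := by
    intro j hj
    have e : n - j = (n - (j + 1)) + 1 := by omega
    rw [e, Nat.choose_succ_succ, Nat.choose_one_right, show Nat.succ 1 = 2 from rfl]
    omega
  have hsq : ∀ j : ℕ, (j + 1) ^ 2 = j ^ 2 + 2 * j + 1 := by intro j; ring
  by_cases hc : n ≤ 3 * k + 2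
  · refine le_trans ?_ (le_max_right _ _)
    apply chain_mono f k m hkm
    intro j hj hj'
    show Nat.choose (n - j) 2 + j ^ 2 ≤ Nat.choose (n - (j + 1)) 2 + (j + 1) ^ 2
    rw [hchoose j hj', hsq]
    omega
  · refine le_trans ?_ (le_max_left _ _)
    apply chain_anti f δ k h1
    intro j hj hj'
    show Nat.choose (n - (j + 1)) 2 + (j + 1) ^ 2 ≤ Nat.choose (n - j) 2 + j ^ 2
    rw [hchoose j (by omega), hsq]
    omega

lemma count_bound {n : ℕ} (hn3 : 3 ≤ n) {H : SimpleGraph (Fin n)} [DecidableRel H.Adj]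
    (hnotham : ¬ ∃ (v : Fin n) (c : H.Walk v v), c.IsHamiltonianCycle)
    (hmax : ∀ u v : Fin n, u ≠ v → ¬ H.Adj u v →
      ∃ (w : Fin n) (c : (H ⊔ SimpleGraph.fromEdgeSet {s(u,v)}).Walk w w), c.IsHamiltonianCycle) :
    ∃ k : ℕ, 2 * k + 1 ≤ n ∧ (∃ w : Fin n, H.degree w = k) ∧
      H.edgeFinset.card ≤ Nat.choose (n - k) 2 + k ^ 2 := by
  have hsum : ∀ u v : Fin n, u ≠ v → ¬ H.Adj u v → H.degree u + H.degree v + 1 ≤ n :=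
    fun u v h1 h2 => degree_sum_bound hn3 hnotham hmax h1 h2
  classical
  set P := Finset.univ.filter (fun p : Fin n × Fin n => p.1 ≠ p.2 ∧ ¬ H.Adj p.1 p.2) with hP
  have hPne : P.Nonempty := by
    by_contra hemp
    rw [Finset.not_nonempty_iff_eq_empty] at hemp
    apply hnotham
    apply complete_ham hn3
    intro x y hxy
    by_contra hnadj
    have hmem : (x, y) ∈ P := Finset.mem_filter.2 ⟨Finset.mem_univ _, hxy, hnadj⟩
    rw [hemp] at hmem
    exact absurd hmem (Finset.notMem_empty _)
  obtain ⟨p, hp, hmaxP⟩ := Finset.exists_max_image P (fun p => H.degree p.1 + H.degree p.2) hPne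
  obtain ⟨hpne, hpnadj⟩ := (Finset.mem_filter.1 hp).2
  obtain ⟨u, v, hune, hunadj, hdle, hM⟩ :
      ∃ u v : Fin n, u ≠ v ∧ ¬ H.Adj u v ∧ H.degree u ≤ H.degree v ∧
        (∀ w, w ≠ v → ¬ H.Adj w v → H.degree w ≤ H.degree u) := by
    rcases le_total (H.degree p.1) (H.degree p.2) with hle | hle
    · refine ⟨p.1, p.2, hpne, hpnadj, hle, ?_⟩
      intro w hw hwn
      have := hmaxP (w, p.2) (Finset.mem_filter.2 ⟨Finset.mem_univ _, hw, hwn⟩)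
      simp only at this
      omega
    · refine ⟨p.2, p.1, hpne.symm, fun h => hpnadj h.symm, hle, ?_⟩
      intro w hw hwn
      have := hmaxP (w, p.1) (Finset.mem_filter.2 ⟨Finset.mem_univ _, hw, hwn⟩)
      simp only at this
      omega
  set k := H.degree u with hk
  have hk2 : 2 * k + 1 ≤ n := by
    have := hsum u v hune hunadj
    omega
  refine ⟨k, hk2, ⟨u, rfl⟩, ?_⟩
  set S1 := Finset.univ.filter (fun w : Fin n => w ≠ v ∧ ¬ H.Adj v w) with hS1d
  have hS1 : S1 = (insert v (H.neighborFinset v))ᶜ := by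
    ext w
    simp only [hS1d, Finset.mem_filter, Finset.mem_univ, true_and, Finset.mem_compl,
      Finset.mem_insert, SimpleGraph.mem_neighborFinset]
    tauto
  have hS1card : S1.card = n - (H.degree v + 1) := by
    rw [hS1, Finset.card_compl,
      Finset.card_insert_of_notMem (by simp [SimpleGraph.mem_neighborFinset])]
    simp [SimpleGraph.card_neighborFinset_eq_degree]
  have hS1deg : ∀ w ∈ S1, H.degree w ≤ k := by
    intro w hw
    obtain ⟨h1, h2⟩ := (Finset.mem_filter.1 hw).2
    exact hM w h1 (fun h => h2 h.symm)
  have hS1k : k ≤ S1.card := by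
    have := hsum u v hune hunadj
    rw [hS1card]
    omega
  obtain ⟨S1', hsub', hcard'⟩ := Finset.exists_subset_card_eq hS1k
  set S2 := Finset.univ.filter (fun w : Fin n => ¬ H.Adj u w) with hS2d
  have hS2deg : ∀ w ∈ S2, H.degree w ≤ n - 1 - k := by
    intro w hw
    have hnadj : ¬ H.Adj u w := (Finset.mem_filter.1 hw).2
    rcases eq_or_ne w u with rfl | hne
    · omega
    · have := hsum u w (Ne.symm hne) hnadj
      omega
  set A := S1'ᶜ ∩ S2 with hA
  set B := S1'ᶜ \ S2 with hB
  have hAB : A.card + B.card = n - k := by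
    rw [hA, hB, Finset.card_inter_add_card_sdiff, Finset.card_compl, hcard']
    simp
  have hBk : B.card ≤ k := by
    have hBsub : B ⊆ H.neighborFinset u := by
      intro w hw
      obtain ⟨_, hw2⟩ := Finset.mem_sdiff.1 hw
      rw [SimpleGraph.mem_neighborFinset]
      by_contra hc
      exact hw2 (Finset.mem_filter.2 ⟨Finset.mem_univ _, hc⟩)
    calc B.card ≤ (H.neighborFinset u).card := Finset.card_le_card hBsub
      _ = k := by rw [SimpleGraph.card_neighborFinset_eq_degree]
  set M := n - 1 - k with hMdef
  have b1 : ∑ w ∈ S1', H.degree w ≤ k * k := by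
    calc ∑ w ∈ S1', H.degree w ≤ S1'.card • k :=
          Finset.sum_le_card_nsmul _ _ _ (fun w hw => hS1deg w (hsub' hw))
      _ = k * k := by rw [hcard', smul_eq_mul]
  have b2 : ∑ w ∈ A, H.degree w ≤ A.card * M := by
    calc ∑ w ∈ A, H.degree w ≤ A.card • M :=
          Finset.sum_le_card_nsmul _ _ _ (fun w hw => hS2deg w (Finset.mem_inter.1 hw).2)
      _ = A.card * M := smul_eq_mul ..
  have b3 : ∑ w ∈ B, H.degree w ≤ B.card * (n - 1) := by
    calc ∑ w ∈ B, H.degree w ≤ B.card • (n - 1) :=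
          Finset.sum_le_card_nsmul _ _ _ (fun w _ => by
            have := H.degree_lt_card_verts w
            simp only [Fintype.card_fin] at this
            omega)
      _ = B.card * (n - 1) := smul_eq_mul ..
  have hfin : 2 * H.edgeFinset.card ≤ 2 * (Nat.choose (n - k) 2 + k ^ 2) := by
    calc 2 * H.edgeFinset.card = ∑ w, H.degree w :=
          (SimpleGraph.sum_degrees_eq_twice_card_edges H).symm
      _ = ∑ w ∈ S1', H.degree w + ∑ w ∈ S1'ᶜ, H.degree w :=
          (Finset.sum_add_sum_compl S1' _).symm
      _ = ∑ w ∈ S1', H.degree w + (∑ w ∈ A, H.degree w + ∑ w ∈ B, H.degree w) := by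
          rw [hA, hB, Finset.sum_inter_add_sum_sdiff]
      _ ≤ k * k + (A.card * M + B.card * (n - 1)) := by
          exact add_le_add b1 (add_le_add b2 b3)
      _ = k * k + ((A.card + B.card) * M + B.card * k) := by
          rw [show n - 1 = M + k from by omega]
          ring
      _ = k * k + ((n - k) * M + B.card * k) := by rw [hAB]
      _ ≤ k * k + ((n - k) * M + k * k) := by
          have := Nat.mul_le_mul_right k hBk
          omega
      _ = 2 * (Nat.choose (n - k) 2 + k ^ 2) := by
          rw [mul_add, two_mul_choose_two, show n - k - 1 = M from by omega]
          ring
  exact Nat.le_of_mul_le_mul_left hfin (by omega)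


/-- **Erdős' theorem.** Let `n ≥ 3` and `1 ≤ δ < n/2`. If `G` is an `n`-vertex
graph with minimum degree at least `δ` and
`e(G) > max{C(n−δ, 2) + δ², C(n−⌊(n−1)/2⌋, 2) + ⌊(n−1)/2⌋²}`, then `G` contains a
Hamilton cycle. -/
theorem erdos_hamilton (n δ : ℕ) (hn : 3 ≤ n) (hδ1 : 1 ≤ δ) (hδ2 : 2 * δ < n)
    (G : SimpleGraph (Fin n)) [DecidableRel G.Adj]
    (hdeg : ∀ v, δ ≤ G.degree v)
    (he : max (Nat.choose (n - δ) 2 + δ ^ 2)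
        (Nat.choose (n - (n - 1) / 2) 2 + ((n - 1) / 2) ^ 2) < G.edgeFinset.card) :
    ∃ (v : Fin n) (c : G.Walk v v), c.IsHamiltonianCycle := by
  by_contra hnot
  classical
  set s : Set (SimpleGraph (Fin n)) :=
    {H | G ≤ H ∧ ¬ ∃ (v : Fin n) (c : H.Walk v v), c.IsHamiltonianCycle} with hs
  have hGs : G ∈ s := ⟨le_refl _, hnot⟩
  obtain ⟨H, hHs, hmaxH⟩ := Set.Finite.exists_maximalFor id s (Set.toFinite s) ⟨G, hGs⟩
  obtain ⟨hGH, hHnot⟩ := hHs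
  haveI : DecidableRel H.Adj := Classical.decRel _
  have hmaxadd : ∀ u v : Fin n, u ≠ v → ¬ H.Adj u v →
      ∃ (w : Fin n) (c : (H ⊔ SimpleGraph.fromEdgeSet {s(u,v)}).Walk w w),
        c.IsHamiltonianCycle := by
    intro u v huv hnadj
    by_contra hno
    have hmem : (H ⊔ SimpleGraph.fromEdgeSet {s(u,v)}) ∈ s :=
      ⟨le_trans hGH le_sup_left, hno⟩
    have heq := le_antisymm le_sup_left (hmaxH hmem le_sup_left)
    apply hnadj
    have hadj' : (H ⊔ SimpleGraph.fromEdgeSet {s(u,v)}).Adj u v := by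
      rw [SimpleGraph.sup_adj]
      right
      rw [SimpleGraph.fromEdgeSet_adj]
      exact ⟨by simp, huv⟩
    simp only [id] at heq
    rw [← heq] at hadj'
    exact hadj'
  have hdegH : ∀ w, δ ≤ H.degree w := by
    intro w
    refine le_trans (hdeg w) ?_
    unfold SimpleGraph.degree
    apply Finset.card_le_card
    intro x hx
    rw [SimpleGraph.mem_neighborFinset] at hx ⊢
    exact hGH hx
  obtain ⟨k, hk2, ⟨w, hwk⟩, hcount⟩ := count_bound hn hHnot hmaxadd
  have hδk : δ ≤ k := by rw [← hwk]; exact hdegH w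
  have hcb := convex_bound hδk hk2 hn
  have hGle : G.edgeFinset.card ≤ H.edgeFinset.card :=
    Finset.card_le_card (SimpleGraph.edgeFinset_mono hGH)
  omega
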